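/- Let F₂ be the free group on X, Y and let Aut₍X,Y₎(F₂) = {θ ∈ Aut(F₂) | θ((X,Y)) = (X,Y)} be the group of automorphisms fixing the commutator (X,Y) = XYX⁻¹Y⁻¹. If θ ∈ Aut₍X,Y₎(F₂) is an inner automorphism, then θ is a power of the inner automorphism x ↦ (X,Y)x(X,Y)⁻¹. -/

import Mathlib

namespace Stmt6

/-- The free group on two generators `X, Y`. -/
abbrev F₂ := FreeGroup Bool

/-- The generator `X`. -/
def X : F₂ := FreeGroup.of true

/-- The generator `Y`. -/
def Y : F₂ := FreeGroup.of false

/-- The commutator `c = (X,Y) = XYX⁻¹Y⁻¹`. -/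
def c : F₂ := X * Y * X⁻¹ * Y⁻¹

/-- The integer Heisenberg group, as triples of integers. -/
structure Heis where
  a : ℤ
  b : ℤ
  c : ℤ

namespace Heis

instance : Mul Heis := ⟨fun x y => ⟨x.a + y.a, x.b + y.b, x.c + y.c + x.a * y.b⟩⟩
instance : One Heis := ⟨⟨0, 0, 0⟩⟩
instance : Inv Heis := ⟨fun x => ⟨-x.a, -x.b, x.a * x.b - x.c⟩⟩

lemma mul_def (x y : Heis) :
    x * y = ⟨x.a + y.a, x.b + y.b, x.c + y.c + x.a * y.b⟩ := rfl

lemma inv_def (x : Heis) : x⁻¹ = ⟨-x.a, -x.b, x.a * x.b - x.c⟩ := rfl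

lemma one_def : (1 : Heis) = ⟨0, 0, 0⟩ := rfl

instance : Group Heis where
  mul_assoc x y z := by
    simp only [mul_def, mk.injEq]; refine ⟨by ring, by ring, by ring⟩
  one_mul x := by simp [mul_def, one_def]
  mul_one x := by simp [mul_def, one_def]
  inv_mul_cancel x := by
    simp only [mul_def, inv_def, one_def, mk.injEq]; refine ⟨by ring, by ring, by ring⟩

/-- First coordinate, as a homomorphism. -/
def π₁ : Heis →* Multiplicative ℤ where
  toFun x := Multiplicative.ofAdd x.a
  map_one' := rfl
  map_mul' x y := by simp [mul_def, ofAdd_add]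

/-- Second coordinate, as a homomorphism. -/
def π₂ : Heis →* Multiplicative ℤ where
  toFun x := Multiplicative.ofAdd x.b
  map_one' := rfl
  map_mul' x y := by simp [mul_def, ofAdd_add]

/-- The central embedding. -/
def j : Multiplicative ℤ →* Heis where
  toFun x := ⟨0, 0, x.toAdd⟩
  map_one' := by simp [one_def]
  map_mul' x y := by simp [mul_def]

end Heis

/-- The homomorphism from `F₂` to the Heisenberg group sending `X, Y` to the two
standard generators. -/
def φ : F₂ →* Heis :=
  FreeGroup.lift fun b => if b then ⟨1, 0, 0⟩ else ⟨0, 1, 0⟩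

lemma φ_X : φ X = ⟨1, 0, 0⟩ := FreeGroup.lift_apply_of

lemma φ_Y : φ Y = ⟨0, 1, 0⟩ := FreeGroup.lift_apply_of

lemma φ_c : φ c = ⟨0, 0, 1⟩ := by
  simp only [c, map_mul, map_inv, φ_X, φ_Y, Heis.inv_def, Heis.mul_def]
  norm_num

/-- Key lemma: the centralizer of `c` in `F₂` is the cyclic group generated by `c`. -/
lemma eq_zpow_of_commute {k : F₂} (hk : Commute k c) : ∃ n : ℤ, k = c ^ n := by
  classical
  set S : Set F₂ := {k, c} with hS
  have hcomm : ∀ x ∈ S, ∀ y ∈ S, x * y = y * x := by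
    rintro x (rfl | rfl) y (rfl | rfl)
    · rfl
    · exact hk
    · exact hk.symm
    · rfl
  set H : Subgroup F₂ := Subgroup.closure S with hH
  letI : CommGroup H := Subgroup.closureCommGroupOfComm hcomm
  obtain ⟨ι, ⟨b⟩⟩ := (inferInstance : IsFreeGroup H).nonempty_basis
  -- `ι` is a subsingleton, since `FreeGroup ι ≃* H` is commutative
  have hFGcomm : ∀ u v : FreeGroup ι, u * v = v * u := fun u v =>
    b.repr.symm.injective (by rw [map_mul, map_mul, mul_comm])
  have hsub : ∀ i i' : ι, i = i' := by
    intro i i'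
    by_contra hne
    set f : FreeGroup ι →* Heis :=
      FreeGroup.lift fun t => if t = i then ⟨1, 0, 0⟩ else if t = i' then ⟨0, 1, 0⟩ else 1
        with hf
    have h2 := congrArg f (hFGcomm (FreeGroup.of i) (FreeGroup.of i'))
    simp only [map_mul, hf, FreeGroup.lift_apply_of, if_pos rfl, if_neg hne, if_neg (Ne.symm hne),
      Heis.mul_def, Heis.mk.injEq] at h2
    norm_num at h2
  -- every element of `H` is a power of a single element `z`
  have hcyc : ∃ z : F₂, ∀ h : F₂, h ∈ H → ∃ p : ℤ, h = z ^ p := by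
    by_cases hι : Nonempty ι
    · obtain ⟨i⟩ := hι
      refine ⟨(b.repr.symm (FreeGroup.of i) : F₂), fun h hh => ?_⟩
      have htop : (⊤ : Subgroup (FreeGroup ι)) ≤ Subgroup.zpowers (FreeGroup.of i) := by
        rw [← FreeGroup.closure_range_of]
        refine (Subgroup.closure_le _).2 ?_
        rintro _ ⟨t, rfl⟩
        rw [hsub t i]
        exact Subgroup.mem_zpowers _
      obtain ⟨p, hp⟩ := htop (Subgroup.mem_top (b.repr ⟨h, hh⟩))
      have hp' : FreeGroup.of i ^ p = b.repr ⟨h, hh⟩ := hp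
      refine ⟨p, ?_⟩
      have : (⟨h, hh⟩ : H) = b.repr.symm (FreeGroup.of i) ^ p := by
        rw [← map_zpow, hp', MulEquiv.symm_apply_apply]
      calc h = ((⟨h, hh⟩ : H) : F₂) := rfl
        _ = ((b.repr.symm (FreeGroup.of i) ^ p : H) : F₂) := by rw [this]
        _ = (b.repr.symm (FreeGroup.of i) : F₂) ^ p := by
              rw [SubgroupClass.coe_zpow]
    · haveI : IsEmpty ι := not_nonempty_iff.mp hι
      refine ⟨1, fun h hh => ⟨0, ?_⟩⟩
      have h1 : ∀ u : FreeGroup ι, u = 1 := by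
        intro u
        have hmem : u ∈ (⊤ : Subgroup (FreeGroup ι)) := Subgroup.mem_top u
        rw [← FreeGroup.closure_range_of, Set.range_eq_empty, Subgroup.closure_empty] at hmem
        exact Subgroup.mem_bot.mp hmem
      have : (⟨h, hh⟩ : H) = 1 := b.repr.injective (by rw [map_one, h1 (b.repr ⟨h, hh⟩)])
      simpa [Subtype.ext_iff] using this
  obtain ⟨z, hz⟩ := hcyc
  have hkH : k ∈ H := Subgroup.subset_closure (Set.mem_insert _ _)
  have hcH : c ∈ H := Subgroup.subset_closure (Set.mem_insert_iff.2 (Or.inr rfl))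
  obtain ⟨p, hp⟩ := hz k hkH
  obtain ⟨m, hm⟩ := hz c hcH
  -- use the Heisenberg group to show `m = ±1`
  have hφzm : φ z ^ m = ⟨0, 0, 1⟩ := by rw [← map_zpow, ← hm, φ_c]
  have hm0 : m ≠ 0 := by
    rintro rfl
    simp only [zpow_zero, Heis.one_def, Heis.mk.injEq] at hφzm
    norm_num at hφzm
  have ha : (φ z).a = 0 := by
    have h1 := congrArg Heis.π₁ hφzm
    rw [map_zpow] at h1
    have h2 : Multiplicative.ofAdd ((φ z).a) ^ m = Multiplicative.ofAdd (0 : ℤ) := h1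
    rw [← ofAdd_zsmul] at h2
    have h3 : m • (φ z).a = 0 := Multiplicative.ofAdd.injective h2
    rw [smul_eq_mul] at h3
    exact (mul_eq_zero.mp h3).resolve_left hm0
  have hb : (φ z).b = 0 := by
    have h1 := congrArg Heis.π₂ hφzm
    rw [map_zpow] at h1
    have h2 : Multiplicative.ofAdd ((φ z).b) ^ m = Multiplicative.ofAdd (0 : ℤ) := h1
    rw [← ofAdd_zsmul] at h2
    have h3 : m • (φ z).b = 0 := Multiplicative.ofAdd.injective h2
    rw [smul_eq_mul] at h3
    exact (mul_eq_zero.mp h3).resolve_left hm0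
  have hzj : φ z = Heis.j (Multiplicative.ofAdd (φ z).c) := by
    have : φ z = ⟨(φ z).a, (φ z).b, (φ z).c⟩ := rfl
    rw [this, ha, hb]; rfl
  have hms : m * (φ z).c = 1 := by
    rw [hzj, ← map_zpow, ← ofAdd_zsmul] at hφzm
    have := congrArg Heis.c hφzm
    rw [mul_comm]
    simpa [Heis.j, smul_eq_mul] using this
  rcases Int.isUnit_iff.mp (IsUnit.of_mul_eq_one (a := m) _ hms) with h1 | h1
  · subst h1
    rw [zpow_one] at hm
    exact ⟨p, by rw [hp, hm]⟩
  · subst h1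
    have : z = c⁻¹ := by rw [hm]; group
    refine ⟨-p, ?_⟩
    rw [hp, this]
    group
/-- If an automorphism `θ` of the free group on `X, Y` fixes the commutator
`c = XYX⁻¹Y⁻¹` and is inner, then `θ` is a power of the inner automorphism
`w ↦ c w c⁻¹`. -/
theorem stmt6 (θ : F₂ ≃* F₂) (hc : θ c = c) (hinner : ∃ k : F₂, ∀ w, θ w = k * w * k⁻¹) :
    ∃ n : ℤ, ∀ w : F₂, θ w = c ^ n * w * (c ^ n)⁻¹ := by
  obtain ⟨k, hθ⟩ := hinner
  have hkc : Commute k c := by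
    have h1 : k * c * k⁻¹ = c := by rw [← hθ, hc]
    have := congrArg (· * k) h1
    exact (by simpa [mul_assoc] using this : k * c = c * k)
  obtain ⟨n, rfl⟩ := eq_zpow_of_commute hkc
  exact ⟨n, hθ⟩

end Stmt6
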